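/- Let A, B ∈ 𝒢(Z,C). If A ⊖ B ≠ ∅, then 0⁺(A ⊖ B) ⊇ 0⁺A ⊇ 0⁺B. If additionally B ≠ ∅, then 0⁺(A ⊖ B) = 0⁺A. -/

import Mathlib

open Set Pointwise

noncomputable section

variable {Z : Type*} [AddCommGroup Z] [Module ℝ Z] [TopologicalSpace Z]

/-- The inf-residual `A ⊖ B = {z : B + {z} ⊆ A}`. -/
def resid (A B : Set Z) : Set Z := {z : Z | B + {z} ⊆ A}

/-- The recession cone `0⁺A`, with the convention `0⁺∅ = ∅`. -/
def recCone (A : Set Z) : Set Z := {z : Z | A.Nonempty ∧ A + {z} ⊆ A}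

/-- `A ⊕ B = cl (A + B)`. -/
def oplus (A B : Set Z) : Set Z := closure (A + B)

/-- Membership in `𝒢(Z,C)`: `A = cl co (A + C)`. -/
def IsG (C A : Set Z) : Prop := A = closure (convexHull ℝ (A + C))

/-- The set `C⁻ \ {0}` of nonzero elements of the negative dual cone. -/
def negDualNZ (C : Set Z) : Set (Z →L[ℝ] ℝ) :=
  {p : Z →L[ℝ] ℝ | (∀ c ∈ C, p c ≤ 0) ∧ p ≠ 0}

/-- `inf {-z*(z) : z ∈ A}` as an extended real. -/
def scal (p : Z →L[ℝ] ℝ) (A : Set Z) : EReal :=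
  sInf ((fun z => ((-(p z) : ℝ) : EReal)) '' A)

/-- Support function `σ(z*|A) = sup {z*(z) : z ∈ A}` as an extended real. -/
def suppF (p : Z →L[ℝ] ℝ) (A : Set Z) : EReal :=
  sSup ((fun z => ((p z : ℝ) : EReal)) '' A)

/-- Inf-residuation on the extended reals: `r ⊖ s = inf {t ∈ ℝ : r ≤ s + t}`. -/
def eresid (r s : EReal) : EReal :=
  sInf ((fun t : ℝ => (t : EReal)) '' {t : ℝ | r ≤ s + (t : EReal)})

variable {X : Type*} [AddCommGroup X] [Module ℝ X]

/-- The scalarization `φ_{f,z*}(x) = inf {-z*(z) : z ∈ f(x)}`. -/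
def phi (f : X → Set Z) (p : Z →L[ℝ] ℝ) (x : X) : EReal := scal p (f x)

/-- Convexity for set-valued functions:
`f(t x₁ + (1-t) x₂) ⊇ cl (t f(x₁) + (1-t) f(x₂))`. -/
def ConvexSV (f : X → Set Z) : Prop :=
  ∀ x₁ x₂ : X, ∀ t : ℝ, t ∈ Ioo (0:ℝ) 1 →
    closure (t • f x₁ + (1 - t) • f x₂) ⊆ f (t • x₁ + (1 - t) • x₂)

/-- The set-valued directional derivative
`f′(x,u) = ⋂_{t₀>0} cl co ⋃_{0<t<t₀} (1/t)•(f(x+tu) ⊖ f(x))`. -/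
def sder (f : X → Set Z) (x u : X) : Set Z :=
  ⋂ t₀ ∈ Ioi (0:ℝ), closure (convexHull ℝ
    (⋃ t ∈ Ioo (0:ℝ) t₀, (1 / t) • resid (f (x + t • u)) (f x)))

/-- The scalar Dini derivative `φ′_{f,z*}(x,u) = inf_{t>0} (1/t)(φ(x+tu) ⊖ φ(x))`. -/
def phiDer (f : X → Set Z) (p : Z →L[ℝ] ℝ) (x u : X) : EReal :=
  ⨅ t ∈ Ioi (0:ℝ), (((1 / t : ℝ)) : EReal) * eresid (phi f p (x + t • u)) (phi f p x)

end


lemma recAux {Z : Type*} [AddCommGroup Z] [Module ℝ Z] [TopologicalSpace Z]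
    [IsTopologicalAddGroup Z] [ContinuousSMul ℝ Z] {A : Set Z}
    (hc : IsClosed A) (hv : Convex ℝ A) {a z : Z}
    (ha : ∀ n : ℕ, a + (n : ℝ) • z ∈ A) {a' : Z} (ha' : a' ∈ A) : a' + z ∈ A := by
  set x : ℕ → Z := fun n =>
    (1 - 1 / ((n : ℝ) + 1)) • a' + (1 / ((n : ℝ) + 1)) • a + z with hx
  have hxmem : ∀ n, x n ∈ A := by
    intro n
    have hpos : (0 : ℝ) < (n : ℝ) + 1 := by positivity
    have h1 : (0 : ℝ) ≤ 1 / ((n : ℝ) + 1) := by positivity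
    have h2 : 1 / ((n : ℝ) + 1) ≤ 1 := by
      rw [div_le_one hpos]; linarith [Nat.cast_nonneg (α := ℝ) n]
    have h3 : (0 : ℝ) ≤ 1 - 1 / ((n : ℝ) + 1) := by linarith
    have hsum : (1 - 1 / ((n : ℝ) + 1)) + 1 / ((n : ℝ) + 1) = 1 := by ring
    have hm := hv ha' (ha (n + 1)) h3 h1 hsum
    have hcast : ((n + 1 : ℕ) : ℝ) = (n : ℝ) + 1 := by push_cast; ring
    rw [hcast] at hm
    have heq : (1 - 1 / ((n : ℝ) + 1)) • a' +
        (1 / ((n : ℝ) + 1)) • (a + ((n : ℝ) + 1) • z) = x n := by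
      rw [hx]
      rw [smul_add, smul_smul]
      have h4 : 1 / ((n : ℝ) + 1) * ((n : ℝ) + 1) = 1 := by field_simp
      rw [h4, one_smul, ← add_assoc]
    rwa [heq] at hm
  have htend : Filter.Tendsto x Filter.atTop (nhds (a' + z)) := by
    have h0 : Filter.Tendsto (fun n : ℕ => 1 / ((n : ℝ) + 1)) Filter.atTop (nhds 0) :=
      tendsto_one_div_add_atTop_nhds_zero_nat
    have h1 : Filter.Tendsto (fun n : ℕ => (1 - 1 / ((n : ℝ) + 1)) • a')
        Filter.atTop (nhds a') := by
      have : Filter.Tendsto (fun n : ℕ => 1 - 1 / ((n : ℝ) + 1)) Filter.atTop (nhds 1) := by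
        simpa using (tendsto_const_nhds (x := (1:ℝ))).sub h0
      simpa using this.smul_const a'
    have h2 : Filter.Tendsto (fun n : ℕ => (1 / ((n : ℝ) + 1)) • a)
        Filter.atTop (nhds (0 : Z)) := by
      simpa using h0.smul_const a
    have h3 := (h1.add h2).add (tendsto_const_nhds (x := z))
    rw [hx]
    simpa using h3
  exact hc.mem_of_tendsto htend (Filter.Eventually.of_forall hxmem)

theorem stmt_3
  {Z : Type*} [AddCommGroup Z] [Module ℝ Z] [TopologicalSpace Z]
  [IsTopologicalAddGroup Z] [ContinuousSMul ℝ Z] [LocallyConvexSpace ℝ Z] [T2Space Z]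
  (C : Set Z) (hCclosed : IsClosed C) (hCconv : Convex ℝ C)
  (hCcone : ∀ c ∈ C, ∀ r : ℝ, 0 < r → r • c ∈ C) (hC0 : (0:Z) ∈ C)
  (A B : Set Z) (hA : IsG C A) (hB : IsG C B) :
    (resid A B ≠ ∅ → recCone B ⊆ recCone A ∧ recCone A ⊆ recCone (resid A B))
    ∧ (resid A B ≠ ∅ → B ≠ ∅ → recCone (resid A B) = recCone A) := by
  have hAclosed : IsClosed A := by rw [hA]; exact isClosed_closure
  have hAconv : Convex ℝ A := by rw [hA]; exact (convex_convexHull ℝ _).closure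
  have iter : ∀ (S : Set Z) (z : Z), S + ({z} : Set Z) ⊆ S →
      ∀ s ∈ S, ∀ n : ℕ, s + (n : ℝ) • z ∈ S := by
    intro S z hS s hs n
    induction n with
    | zero => simpa using hs
    | succ k ih =>
        have h1 : (s + (k : ℝ) • z) + z ∈ S := by
          apply hS
          rw [Set.add_singleton]
          exact Set.mem_image_of_mem _ ih
        push_cast
        rw [add_smul, one_smul, ← add_assoc]
        exact h1
  have memadd : ∀ (S : Set Z) (z s : Z), s ∈ S → s + z ∈ S + ({z} : Set Z) := by
    intro S z s hs
    rw [Set.add_singleton]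
    exact Set.mem_image_of_mem _ hs
  have hAR : resid A B ≠ ∅ → recCone A ⊆ recCone (resid A B) := by
    intro hne z hz
    obtain ⟨hAne, hAz⟩ := hz
    refine ⟨Set.nonempty_iff_ne_empty.2 hne, ?_⟩
    intro w hw
    rw [Set.add_singleton] at hw
    obtain ⟨w', hw', rfl⟩ := hw
    intro y hy
    rw [Set.add_singleton] at hy
    obtain ⟨b, hb, rfl⟩ := hy
    have hbw : b + w' ∈ A := hw' (memadd B w' b hb)
    have h1 : (b + w') + z ∈ A := hAz (memadd A z _ hbw)
    rwa [add_assoc] at h1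
  have hBA : resid A B ≠ ∅ → recCone B ⊆ recCone A := by
    intro hne z hz
    obtain ⟨⟨b, hb⟩, hBz⟩ := hz
    obtain ⟨w, hw⟩ := Set.nonempty_iff_ne_empty.2 hne
    have ha : (b + w) ∈ A := hw (memadd B w b hb)
    have han : ∀ n : ℕ, (b + w) + (n : ℝ) • z ∈ A := by
      intro n
      have h1 : b + (n : ℝ) • z ∈ B := iter B z hBz b hb n
      have h2 := hw (memadd B w _ h1)
      rwa [add_right_comm] at h2
    refine ⟨⟨b + w, ha⟩, ?_⟩
    intro y hy
    rw [Set.add_singleton] at hy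
    obtain ⟨a', ha', rfl⟩ := hy
    exact recAux hAclosed hAconv han ha'
  have hRA : B ≠ ∅ → recCone (resid A B) ⊆ recCone A := by
    intro hBne z hz
    obtain ⟨⟨w, hw⟩, hRz⟩ := hz
    obtain ⟨b, hb⟩ := Set.nonempty_iff_ne_empty.2 hBne
    have ha : b + w ∈ A := hw (memadd B w b hb)
    have han : ∀ n : ℕ, (b + w) + (n : ℝ) • z ∈ A := by
      intro n
      have hwn : w + (n : ℝ) • z ∈ resid A B := iter _ z hRz w hw n
      have h2 := hwn (memadd B _ b hb)
      rwa [← add_assoc] at h2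
    refine ⟨⟨b + w, ha⟩, ?_⟩
    intro y hy
    rw [Set.add_singleton] at hy
    obtain ⟨a', ha', rfl⟩ := hy
    exact recAux hAclosed hAconv han ha'
  refine ⟨fun hne => ⟨hBA hne, hAR hne⟩, fun hne hBne => ?_⟩
  exact Set.Subset.antisymm (hRA hBne) (hAR hne)
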